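/- In the ℓ₁-plane, if two axis-parallel rectangles R₁ = I(t₁,t₁') and R₂ = I(t₂,t₂') spanned by pairs of terminals cross (R₁ is 'vertical', R₂ is 'horizontal', and their interiors intersect), then from a shortest rectilinear path joining t₁,t₁' and one joining t₂,t₂', one can extract shortest rectilinear paths joining t₁ with t₂' and t₁' with t₂. Formally: d(t₁,t₂') + d(t₁',t₂) ≤ d(t₁,t₁') + d(t₂,t₂') when the rectangles cross. -/
import Mathlib

lemma crossing_aux (a b c d : ℝ) (h1 : min c d ≤ min a b) (h2 : max a b ≤ max c d) :
    |a - d| + |b - c| ≤ |a - b| + |c - d| := by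
  simp only [min_def, max_def] at h1 h2
  split_ifs at h1 h2 <;>
    rcases abs_cases (a - d) with ⟨e1, f1⟩ | ⟨e1, f1⟩ <;>
    rcases abs_cases (b - c) with ⟨e2, f2⟩ | ⟨e2, f2⟩ <;>
    rcases abs_cases (a - b) with ⟨e3, f3⟩ | ⟨e3, f3⟩ <;>
    rcases abs_cases (c - d) with ⟨e4, f4⟩ | ⟨e4, f4⟩ <;>
    rw [e1, e2, e3, e4] <;> linarith

/-- ℓ₁ distance in the plane. -/
def dL1 (p q : ℝ × ℝ) : ℝ := |p.1 - q.1| + |p.2 - q.2|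

/-- If the rectangles `I(t₁,t₁')` (vertical) and `I(t₂,t₂')` (horizontal) cross,
then `d(t₁,t₂') + d(t₁',t₂) ≤ d(t₁,t₁') + d(t₂,t₂')`. -/
theorem crossing_rectangles_ineq
    (t₁ t₁' t₂ t₂' : ℝ × ℝ)
    (hx1 : min t₂.1 t₂'.1 ≤ min t₁.1 t₁'.1)
    (hx2 : max t₁.1 t₁'.1 ≤ max t₂.1 t₂'.1)
    (hy1 : min t₁.2 t₁'.2 ≤ min t₂.2 t₂'.2)
    (hy2 : max t₂.2 t₂'.2 ≤ max t₁.2 t₁'.2)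
    (hintx : min t₁.1 t₁'.1 < max t₁.1 t₁'.1)
    (hinty : min t₂.2 t₂'.2 < max t₂.2 t₂'.2) :
    dL1 t₁ t₂' + dL1 t₁' t₂ ≤ dL1 t₁ t₁' + dL1 t₂ t₂' := by
  have hxs := crossing_aux t₁.1 t₁'.1 t₂.1 t₂'.1 hx1 hx2
  have hys := crossing_aux t₂.2 t₂'.2 t₁.2 t₁'.2 hy1 hy2
  simp only [dL1]
  rw [abs_sub_comm t₁.2 t₂'.2, abs_sub_comm t₁'.2 t₂.2]
  linarith
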